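/- Let n ≥ 1, p ∈ ℂⁿ, and t, ρ > 0, and let V, W be holomorphic vector fields on an open neighborhood of the closed polydisc B_{t+ρ}(p) ⊆ ℂⁿ. Then ‖[V,W]‖_{B_t(p)} ≤ (2n/ρ) · ‖V‖_{B_{t+ρ}(p)} · ‖W‖_{B_{t+ρ}(p)}. -/

import Mathlib

/-- The Lie bracket of holomorphic vector fields `V, W : Ω → ℂⁿ`,
`[V,W](z) = DW(z)(V(z)) − DV(z)(W(z))`. -/
noncomputable def lieB {n : ℕ} (V W : (Fin n → ℂ) → (Fin n → ℂ)) :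
    (Fin n → ℂ) → (Fin n → ℂ) :=
  fun z => fderiv ℂ W z (V z) - fderiv ℂ V z (W z)

/-- The closed polydisc of polyradius `r` centered at `p`. -/
def polyDisc {n : ℕ} (p : Fin n → ℂ) (r : ℝ) : Set (Fin n → ℂ) :=
  {z | ∀ j, ‖z j - p j‖ ≤ r}

/-- `‖V‖_K = max_j sup_{z ∈ K} |V^j(z)|` (the sup over `K` of the sup-norm of `V`). -/
noncomputable def vfNorm {n : ℕ} (V : (Fin n → ℂ) → (Fin n → ℂ))
    (K : Set (Fin n → ℂ)) : ℝ :=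
  ⨆ z ∈ K, ‖V z‖

open Metric Set
section aux
variable {n : ℕ}

lemma polyDisc_eq (p : Fin n → ℂ) (r : ℝ) :
    polyDisc p r = Set.univ.pi (fun j => Metric.closedBall (p j) r) := by
  ext z
  simp [polyDisc, Metric.mem_closedBall, dist_eq_norm]

lemma isCompact_polyDisc (p : Fin n → ℂ) (r : ℝ) : IsCompact (polyDisc p r) := by
  rw [polyDisc_eq]
  exact isCompact_univ_pi fun j => isCompact_closedBall _ _

lemma polyDisc_mono (p : Fin n → ℂ) {r s : ℝ} (h : r ≤ s) : polyDisc p r ⊆ polyDisc p s :=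
  fun z hz j => (hz j).trans h

lemma vfNorm_nonneg (V : (Fin n → ℂ) → Fin n → ℂ) (K : Set (Fin n → ℂ)) :
    0 ≤ vfNorm V K :=
  Real.iSup_nonneg fun _ => Real.iSup_nonneg fun _ => norm_nonneg _

lemma le_vfNorm {V : (Fin n → ℂ) → Fin n → ℂ} {K : Set (Fin n → ℂ)}
    (hK : IsCompact K) (hV : ContinuousOn V K) {z : Fin n → ℂ} (hz : z ∈ K) :
    ‖V z‖ ≤ vfNorm V K := by
  obtain ⟨C, hC⟩ := (hK.image_of_continuousOn (hV.norm)).bddAbove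
  have hb : BddAbove (Set.range fun z => ⨆ _ : z ∈ K, ‖V z‖) := by
    refine ⟨max C 0, ?_⟩
    rintro x ⟨y, rfl⟩
    by_cases hy : y ∈ K
    · rw [show (fun z => ⨆ _ : z ∈ K, ‖V z‖) y = ‖V y‖ from ciSup_pos hy]
      exact le_max_of_le_left (hC ⟨y, hy, rfl⟩)
    · haveI : IsEmpty (y ∈ K) := ⟨hy⟩
      rw [show (fun z => ⨆ _ : z ∈ K, ‖V z‖) y = sSup ∅ from iSup_of_empty' _,
        Real.sSup_empty]
      exact le_max_right _ _
  calc ‖V z‖ = ⨆ _ : z ∈ K, ‖V z‖ := (show (⨆ _ : z ∈ K, ‖V z‖) = ‖V z‖ from ciSup_pos hz).symm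
    _ ≤ vfNorm V K := le_ciSup hb z

lemma vfNorm_le {V : (Fin n → ℂ) → Fin n → ℂ} {K : Set (Fin n → ℂ)} {C : ℝ}
    (h0 : 0 ≤ C) (h : ∀ z ∈ K, ‖V z‖ ≤ C) : vfNorm V K ≤ C :=
  Real.iSup_le (fun z => Real.iSup_le (fun hz => h z hz) h0) h0

/-- Cauchy estimate for a directional derivative. -/
lemma fderiv_single_bound (p : Fin n → ℂ) {t ρ : ℝ} (ht : 0 ≤ t) (hρ : 0 < ρ)
    {Ω : Set (Fin n → ℂ)} (hΩ : IsOpen Ω) (hsub : polyDisc p (t + ρ) ⊆ Ω)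
    {F : (Fin n → ℂ) → Fin n → ℂ} (hF : DifferentiableOn ℂ F Ω)
    {C : ℝ} (hC : ∀ y ∈ polyDisc p (t + ρ), ‖F y‖ ≤ C)
    {z : Fin n → ℂ} (hz : z ∈ polyDisc p t) (j : Fin n) :
    ‖fderiv ℂ F z (Pi.single j 1)‖ ≤ C / ρ := by
  set u : Fin n → ℂ := Pi.single j 1 with hu
  have hmem : ∀ w : ℂ, ‖w‖ ≤ ρ → z + w • u ∈ polyDisc p (t + ρ) := by
    intro w hw k
    have h1 : ‖(z + w • u) k - p k‖ ≤ ‖z k - p k‖ + ‖w • u k‖ := by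
      have : (z + w • u) k - p k = (z k - p k) + w • u k := by
        simp [Pi.add_apply]; ring
      rw [this]; exact norm_add_le _ _
    have h2 : ‖u k‖ ≤ 1 := by
      rcases eq_or_ne k j with rfl | hk
      · simp [hu]
      · simp [hu, Pi.single_apply, hk]
    have h3 : ‖w • u k‖ ≤ ρ := by
      rw [norm_smul]
      calc ‖w‖ * ‖u k‖ ≤ ρ * 1 := mul_le_mul hw h2 (norm_nonneg _) hρ.le
        _ = ρ := mul_one ρ
    exact h1.trans (add_le_add (hz k) h3)
  set g : ℂ → Fin n → ℂ := fun w => F (z + w • u) with hg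
  have hzΩ : z ∈ Ω := hsub (polyDisc_mono p (by linarith) hz)
  have hFz : DifferentiableAt ℂ F z := hF.differentiableAt (hΩ.mem_nhds hzΩ)
  have hφ : HasDerivAt (fun w : ℂ => z + w • u) u 0 := by
    simpa using ((hasDerivAt_id (0:ℂ)).smul_const u).const_add z
  have hgd : HasDerivAt g (fderiv ℂ F z u) 0 := by
    have hFz' : HasFDerivAt F (fderiv ℂ F z) (z + (0:ℂ) • u) := by
      simpa using hFz.hasFDerivAt
    exact hFz'.comp_hasDerivAt 0 hφ
  have hgdiff : DifferentiableOn ℂ g (Metric.closedBall (0:ℂ) ρ) := by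
    apply hF.comp
    · intro w _
      exact Differentiable.differentiableAt (by fun_prop) |>.differentiableWithinAt
    · intro w hw
      exact hsub (hmem w (by simpa [Metric.mem_closedBall,
        dist_eq_norm] using hw))
  have hdc : DiffContOnCl ℂ g (Metric.ball (0:ℂ) ρ) := by
    apply DifferentiableOn.diffContOnCl
    rwa [closure_ball (0:ℂ) hρ.ne']
  have := Complex.norm_deriv_le_of_forall_mem_sphere_norm_le hρ hdc
    (C := C) (fun w hw => by
      apply hC
      apply hmem
      simp only [mem_sphere_iff_norm, sub_zero] at hw
      exact hw.le)
  rwa [hgd.deriv] at this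

lemma fderiv_apply_bound (p : Fin n → ℂ) {t ρ : ℝ} (ht : 0 ≤ t) (hρ : 0 < ρ)
    {Ω : Set (Fin n → ℂ)} (hΩ : IsOpen Ω) (hsub : polyDisc p (t + ρ) ⊆ Ω)
    {F : (Fin n → ℂ) → Fin n → ℂ} (hF : DifferentiableOn ℂ F Ω)
    {C : ℝ} (hC : ∀ y ∈ polyDisc p (t + ρ), ‖F y‖ ≤ C)
    {z : Fin n → ℂ} (hz : z ∈ polyDisc p t) (v : Fin n → ℂ) :
    ‖fderiv ℂ F z v‖ ≤ n * ‖v‖ * (C / ρ) := by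
  have hv : v = ∑ j, v j • (Pi.single j 1 : Fin n → ℂ) := by
    ext i
    simp [Pi.single_apply]
  have hC0 : 0 ≤ C := (norm_nonneg _).trans (hC p (fun j => by simp; linarith))
  calc ‖fderiv ℂ F z v‖ = ‖∑ j, v j • fderiv ℂ F z ((Pi.single j 1 : Fin n → ℂ))‖ := by
        conv_lhs => rw [hv]
        rw [map_sum]
        simp
    _ ≤ ∑ j : Fin n, ‖v j • fderiv ℂ F z ((Pi.single j 1 : Fin n → ℂ))‖ := norm_sum_le _ _
    _ ≤ ∑ _j : Fin n, ‖v‖ * (C / ρ) := by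
        apply Finset.sum_le_sum
        intro j _
        rw [norm_smul]
        exact mul_le_mul (norm_le_pi_norm v j)
          (fderiv_single_bound p ht hρ hΩ hsub hF hC hz j) (norm_nonneg _) (norm_nonneg _)
    _ = n * ‖v‖ * (C / ρ) := by
        rw [Finset.sum_const, Finset.card_univ, Fintype.card_fin]
        push_cast; ring

end aux

/-- Base case of the nested commutator estimate: for holomorphic vector fields `V, W`
on a neighborhood of `B_{t+ρ}(p)`, `‖[V,W]‖_{B_t} ≤ (2n/ρ)‖V‖_{B_{t+ρ}}‖W‖_{B_{t+ρ}}`. -/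
theorem stmt_3 (n : ℕ) (hn : 1 ≤ n) (p : Fin n → ℂ) (t ρ : ℝ) (ht : 0 < t) (hρ : 0 < ρ)
    (Ω : Set (Fin n → ℂ)) (hΩ : IsOpen Ω) (hsub : polyDisc p (t + ρ) ⊆ Ω)
    (V W : (Fin n → ℂ) → (Fin n → ℂ))
    (hV : DifferentiableOn ℂ V Ω) (hW : DifferentiableOn ℂ W Ω) :
    vfNorm (lieB V W) (polyDisc p t)
      ≤ (2 * n / ρ) * vfNorm V (polyDisc p (t + ρ)) * vfNorm W (polyDisc p (t + ρ)) := by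
  set K := polyDisc p (t + ρ) with hK
  have hKt : polyDisc p t ⊆ K := polyDisc_mono p (by linarith)
  set CV := vfNorm V K with hCV
  set CW := vfNorm W K with hCW
  have hCV0 : 0 ≤ CV := vfNorm_nonneg _ _
  have hCW0 : 0 ≤ CW := vfNorm_nonneg _ _
  have hVb : ∀ y ∈ K, ‖V y‖ ≤ CV := fun y hy =>
    le_vfNorm (isCompact_polyDisc p _) ((hV.mono hsub).continuousOn) hy
  have hWb : ∀ y ∈ K, ‖W y‖ ≤ CW := fun y hy =>
    le_vfNorm (isCompact_polyDisc p _) ((hW.mono hsub).continuousOn) hy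
  apply vfNorm_le
  · have : (0:ℝ) ≤ 2 * n / ρ := by positivity
    exact mul_nonneg (mul_nonneg this hCV0) hCW0
  intro z hz
  have h1 : ‖fderiv ℂ W z (V z)‖ ≤ n * ‖V z‖ * (CW / ρ) :=
    fderiv_apply_bound p ht.le hρ hΩ hsub hW hWb hz _
  have h2 : ‖fderiv ℂ V z (W z)‖ ≤ n * ‖W z‖ * (CV / ρ) :=
    fderiv_apply_bound p ht.le hρ hΩ hsub hV hVb hz _
  have hVz : ‖V z‖ ≤ CV := hVb z (hKt hz)
  have hWz : ‖W z‖ ≤ CW := hWb z (hKt hz)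
  calc ‖lieB V W z‖ ≤ ‖fderiv ℂ W z (V z)‖ + ‖fderiv ℂ V z (W z)‖ := norm_sub_le _ _
    _ ≤ n * ‖V z‖ * (CW / ρ) + n * ‖W z‖ * (CV / ρ) := add_le_add h1 h2
    _ ≤ n * CV * (CW / ρ) + n * CW * (CV / ρ) := by gcongr <;> positivity
    _ = (2 * n / ρ) * CV * CW := by field_simp; ring
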